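/- Let M ≥ N ≥ 1 be integers and a > −1 a real number, and set e_a(x) = exp((a/(1+a))·2Mx) and f_n(x) = L_n^{(2(M−N))}(2Mx). Then for every integer n ≥ 1, ⟨e_a, f_n⟩_4 = ((1+a)/(2M))^{2(M−N)+1} · ( (−a)^{n+1} (n+2(M−N)+1)!/n! − (−a)^{n−1} (n+2(M−N))!/(n−1)! ), and for n = 0, ⟨e_a, f_0⟩_4 = −((1+a)/(2M))^{2(M−N)+1} · a · (2(M−N)+1)!. -/

import Mathlib

open MeasureTheory
open Set Real

/-- The generalized Laguerre polynomial
`L_n^(α)(x) = ∑_{k=0}^{n} (-1)^k (n+α choose n-k) x^k / k!`. -/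
noncomputable def genLaguerre (n α : ℕ) (x : ℝ) : ℝ :=
  ∑ k ∈ Finset.range (n + 1),
    (-1 : ℝ) ^ k * ((n + α).choose (n - k) : ℝ) * x ^ k / (k.factorial : ℝ)

/-- The skew inner product
`⟨f, g⟩₄ = ∫_0^∞ (f(x) g'(x) - f'(x) g(x)) x^(2(M-N)+1) e^(-2Mx) dx`. -/
noncomputable def skewInner (M N : ℕ) (f g : ℝ → ℝ) : ℝ :=
  ∫ x in Set.Ioi (0 : ℝ),
    (f x * deriv g x - deriv f x * g x) * x ^ (2 * (M - N) + 1) *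
      Real.exp (-(2 * (M : ℝ)) * x)

lemma integrableOn_pow_exp (m : ℕ) {r : ℝ} (hr : 0 < r) :
    IntegrableOn (fun x : ℝ => x ^ m * Real.exp (-(r * x))) (Set.Ioi 0) := by
  have h := integrableOn_rpow_mul_exp_neg_mul_rpow (p := 1) (s := (m : ℝ)) (b := r)
    (by exact_mod_cast neg_one_lt_zero.trans_le (by positivity)) one_pos hr
  simpa [Real.rpow_natCast, Real.rpow_one, neg_mul] using h

lemma integral_pow_exp (m : ℕ) {r : ℝ} (hr : 0 < r) :
    ∫ x in Set.Ioi (0:ℝ), x ^ m * Real.exp (-(r * x)) = m.factorial / r ^ (m + 1) := by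
  have h := Real.integral_rpow_mul_exp_neg_mul_Ioi (a := (m : ℝ) + 1) (by positivity) hr
  have e1 : ((m : ℝ) + 1) - 1 = (m : ℝ) := by ring
  rw [e1] at h
  simp_rw [Real.rpow_natCast] at h
  rw [h, show ((m : ℝ) + 1) = ((m + 1 : ℕ) : ℝ) by push_cast; ring, Real.rpow_natCast,
    Nat.cast_add, Nat.cast_one, Real.Gamma_nat_eq_factorial]
  rw [div_pow, one_pow]
  ring

lemma skew_eval (M N n : ℕ) (hM : 1 ≤ M) (a : ℝ) (ha : -1 < a) :
    skewInner M N (fun x => Real.exp (a / (1 + a) * (2 * (M : ℝ) * x)))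
        (fun x => genLaguerre n (2 * (M - N)) (2 * (M : ℝ) * x))
    = ((1 + a) / (2 * (M : ℝ))) ^ (2 * (M - N) + 1) *
        ((∑ k ∈ Finset.range (n + 1),
            (-1 : ℝ) ^ k * ((n + 2 * (M - N)).choose (n - k) : ℝ) * (k : ℝ)
              * ((k + 2 * (M - N)).factorial : ℝ) / (k.factorial : ℝ) * (1 + a) ^ k)
          - a * ∑ k ∈ Finset.range (n + 1),
              (-1 : ℝ) ^ k * ((n + 2 * (M - N)).choose (n - k) : ℝ)
                * ((k + 2 * (M - N) + 1).factorial : ℝ) / (k.factorial : ℝ) * (1 + a) ^ k) := by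
  set α : ℕ := 2 * (M - N) with hα
  set c : ℝ := 2 * (M : ℝ) with hcdef
  have hc : 0 < c := by
    have : (1 : ℝ) ≤ (M : ℝ) := by exact_mod_cast hM
    rw [hcdef]; linarith
  have hu : 0 < 1 + a := by linarith
  set u : ℝ := 1 + a with hudef
  set b : ℝ := a / u with hbdef
  set s : ℝ := c / u with hsdef
  have hs : 0 < s := div_pos hc hu
  set E : ℝ → ℝ := fun x => Real.exp (b * (c * x)) with hEdef
  set F : ℝ → ℝ := fun x => genLaguerre n α (c * x) with hFdef
  -- derivatives
  have hEd : ∀ x : ℝ, HasDerivAt E (b * c * E x) x := by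
    intro x
    have h1 : HasDerivAt (fun x : ℝ => b * (c * x)) (b * c) x := by
      simpa [mul_assoc] using (hasDerivAt_id x).const_mul (b * c)
    rw [show b * c * E x = E x * (b * c) by ring]
    exact h1.exp
  have hFd : ∀ x : ℝ, HasDerivAt F
      (∑ k ∈ Finset.range (n + 1),
        (-1 : ℝ) ^ k * ((n + α).choose (n - k) : ℝ) * ((k : ℝ) * (c * x) ^ (k - 1) * c)
          / (k.factorial : ℝ)) x := by
    intro x
    have h1 : ∀ k ∈ Finset.range (n + 1), HasDerivAt
        (fun x : ℝ => (-1 : ℝ) ^ k * ((n + α).choose (n - k) : ℝ) * (c * x) ^ k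
          / (k.factorial : ℝ))
        ((-1 : ℝ) ^ k * ((n + α).choose (n - k) : ℝ) * ((k : ℝ) * (c * x) ^ (k - 1) * c)
          / (k.factorial : ℝ)) x := by
      intro k _
      have hcx : HasDerivAt (fun x : ℝ => c * x) c x := by
        simpa using (hasDerivAt_id x).const_mul c
      exact ((hcx.pow k).const_mul _).div_const _
    have h2 := HasDerivAt.fun_sum h1
    simpa [hFdef, genLaguerre] using h2
  -- pointwise form of the integrand
  have hpt : ∀ x : ℝ,
      (E x * deriv F x - deriv E x * F x) * x ^ (α + 1) * Real.exp (-c * x)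
      = ∑ k ∈ Finset.range (n + 1),
          (((-1 : ℝ) ^ k * ((n + α).choose (n - k) : ℝ) * (k : ℝ) * c ^ k
              / (k.factorial : ℝ)) * (x ^ (k + α) * Real.exp (-(s * x)))
            + (-(b * c) * ((-1 : ℝ) ^ k * ((n + α).choose (n - k) : ℝ) * c ^ k
              / (k.factorial : ℝ))) * (x ^ (k + α + 1) * Real.exp (-(s * x)))) := by
    intro x
    rw [(hEd x).deriv, (hFd x).deriv]
    have hexp : E x * Real.exp (-c * x) = Real.exp (-(s * x)) := by
      rw [hEdef, ← Real.exp_add]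
      congr 1
      rw [hbdef, hsdef]
      field_simp
      ring
    rw [hFdef]
    simp only [genLaguerre]
    rw [Finset.mul_sum, Finset.mul_sum, ← Finset.sum_sub_distrib,
      Finset.sum_mul, Finset.sum_mul]
    apply Finset.sum_congr rfl
    intro k _
    have hx1 : (k : ℝ) * (c * x) ^ (k - 1) * c * x ^ (α + 1) = (k : ℝ) * c ^ k * x ^ (k + α) := by
      cases k with
      | zero => simp
      | succ j =>
        simp only [Nat.succ_sub_one, mul_pow]
        rw [show j + 1 + α = j + (α + 1) by omega, pow_add, pow_succ]
        ring
    have hx2 : (c * x) ^ k * x ^ (α + 1) = c ^ k * x ^ (k + α + 1) := by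
      rw [mul_pow, show k + α + 1 = k + (α + 1) by omega, pow_add]; ring
    have hck : (k : ℝ) * c ^ (k - 1) * c = (k : ℝ) * c ^ k := by
      cases k with
      | zero => simp
      | succ j => rw [Nat.succ_sub_one, pow_succ]; ring
    calc (E x * ((-1 : ℝ) ^ k * ((n + α).choose (n - k) : ℝ) * ((k : ℝ) * (c * x) ^ (k - 1) * c)
            / (k.factorial : ℝ))
          - b * c * E x * ((-1 : ℝ) ^ k * ((n + α).choose (n - k) : ℝ) * (c * x) ^ k
            / (k.factorial : ℝ))) * x ^ (α + 1) * Real.exp (-c * x)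
        = ((-1 : ℝ) ^ k * ((n + α).choose (n - k) : ℝ) * ((k : ℝ) * (c * x) ^ (k - 1) * c * x ^ (α + 1))
            / (k.factorial : ℝ)
          - b * c * ((-1 : ℝ) ^ k * ((n + α).choose (n - k) : ℝ) * ((c * x) ^ k * x ^ (α + 1))
            / (k.factorial : ℝ))) * (E x * Real.exp (-c * x)) := by ring
      _ = _ := by
          rw [hx1, hx2, hexp]
          field_simp
          ring
  -- assemble the integral
  have hint : ∀ k : ℕ, IntegrableOn
      (fun x : ℝ =>
        (((-1 : ℝ) ^ k * ((n + α).choose (n - k) : ℝ) * (k : ℝ) * c ^ k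
            / (k.factorial : ℝ)) * (x ^ (k + α) * Real.exp (-(s * x)))
          + (-(b * c) * ((-1 : ℝ) ^ k * ((n + α).choose (n - k) : ℝ) * c ^ k
            / (k.factorial : ℝ))) * (x ^ (k + α + 1) * Real.exp (-(s * x))))) (Set.Ioi 0) := by
    intro k
    exact ((integrableOn_pow_exp (k + α) hs).const_mul _).add
      ((integrableOn_pow_exp (k + α + 1) hs).const_mul _)
  have key : skewInner M N E F
      = ∑ k ∈ Finset.range (n + 1),
          (((-1 : ℝ) ^ k * ((n + α).choose (n - k) : ℝ) * (k : ℝ) * c ^ k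
              / (k.factorial : ℝ)) * (((k + α).factorial : ℝ) / s ^ (k + α + 1))
            + (-(b * c) * ((-1 : ℝ) ^ k * ((n + α).choose (n - k) : ℝ) * c ^ k
              / (k.factorial : ℝ))) * (((k + α + 1).factorial : ℝ) / s ^ (k + α + 2))) := by
    unfold skewInner
    rw [show (fun x : ℝ => (E x * deriv F x - deriv E x * F x) * x ^ (2 * (M - N) + 1) *
        Real.exp (-(2 * (M : ℝ)) * x)) = fun x : ℝ => ∑ k ∈ Finset.range (n + 1),
          (((-1 : ℝ) ^ k * ((n + α).choose (n - k) : ℝ) * (k : ℝ) * c ^ k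
              / (k.factorial : ℝ)) * (x ^ (k + α) * Real.exp (-(s * x)))
            + (-(b * c) * ((-1 : ℝ) ^ k * ((n + α).choose (n - k) : ℝ) * c ^ k
              / (k.factorial : ℝ))) * (x ^ (k + α + 1) * Real.exp (-(s * x))))
      from funext fun x => by rw [← hα, ← hcdef]; exact hpt x]
    rw [integral_finset_sum _ (fun k _ => hint k)]
    apply Finset.sum_congr rfl
    intro k _
    rw [integral_add (((integrableOn_pow_exp (k + α) hs).const_mul _))
      (((integrableOn_pow_exp (k + α + 1) hs).const_mul _)),
      integral_const_mul, integral_const_mul, integral_pow_exp _ hs, integral_pow_exp _ hs]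
  rw [key, Finset.mul_sum, ← Finset.sum_sub_distrib, Finset.mul_sum]
  apply Finset.sum_congr rfl
  intro k _
  have hcne : c ≠ 0 := ne_of_gt hc
  have hune : u ≠ 0 := ne_of_gt hu
  have hkf : (k.factorial : ℝ) ≠ 0 := Nat.cast_ne_zero.mpr k.factorial_ne_zero
  rw [hsdef, hbdef, div_pow, div_pow, div_pow]
  field_simp
  ring


lemma choose_fact_key (n α k : ℕ) (hk : k ≤ n) :
    (n + α).choose (n - k) * (k + α).factorial * n.factorial
      = (n + α).factorial * (n.choose k * k.factorial) := by
  have h1 : (n + α).choose (n - k) * (n - k).factorial * (k + α).factorial = (n + α).factorial := by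
    have := Nat.choose_mul_factorial_mul_factorial (show n - k ≤ n + α by omega)
    rwa [show n + α - (n - k) = k + α by omega] at this
  have h2 : n.choose k * k.factorial * (n - k).factorial = n.factorial := Nat.choose_mul_factorial_mul_factorial hk
  have hpos : 0 < (n - k).factorial := Nat.factorial_pos _
  apply Nat.eq_of_mul_eq_mul_right hpos
  calc (n + α).choose (n - k) * (k + α).factorial * n.factorial * (n - k).factorial
      = ((n + α).choose (n - k) * (n - k).factorial * (k + α).factorial) * n.factorial := by ring
    _ = (n + α).factorial * (n.choose k * k.factorial * (n - k).factorial) := by rw [h1, h2]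
    _ = (n + α).factorial * (n.choose k * k.factorial) * (n - k).factorial := by ring

/-- `∑_k (-1)^k C(n+α,n-k) (k+α)!/k! u^k = ((n+α)!/n!) (1-u)^n`. -/
lemma laguerre_sum (n α : ℕ) (u : ℝ) :
    ∑ k ∈ Finset.range (n + 1),
      (-1 : ℝ) ^ k * ((n + α).choose (n - k) : ℝ) * ((k + α).factorial : ℝ)
        / (k.factorial : ℝ) * u ^ k
      = ((n + α).factorial : ℝ) / (n.factorial : ℝ) * (1 - u) ^ n := by
  have hb : (1 - u) ^ n = ∑ k ∈ Finset.range (n + 1), (-u) ^ k * 1 ^ (n - k) * n.choose k := by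
    rw [← add_pow]; ring_nf
  rw [hb, Finset.mul_sum]
  apply Finset.sum_congr rfl
  intro k hk
  have hk' : k ≤ n := by simpa [Nat.lt_succ_iff] using hk
  have key := choose_fact_key n α k hk'
  have keyR : ((n + α).choose (n - k) : ℝ) * ((k + α).factorial : ℝ) * (n.factorial : ℝ)
      = ((n + α).factorial : ℝ) * ((n.choose k : ℝ) * (k.factorial : ℝ)) := by
    exact_mod_cast key
  have hkf : (k.factorial : ℝ) ≠ 0 := Nat.cast_ne_zero.mpr k.factorial_ne_zero
  have hnf : (n.factorial : ℝ) ≠ 0 := Nat.cast_ne_zero.mpr n.factorial_ne_zero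
  rw [neg_pow, one_pow]
  field_simp
  linear_combination ((-1:ℝ)^k * u^k) * keyR

lemma laguerre_sum_deriv (m α : ℕ) (u : ℝ) :
    ∑ k ∈ Finset.range (m + 2),
      (-1 : ℝ) ^ k * ((m + 1 + α).choose (m + 1 - k) : ℝ) * (k : ℝ)
        * ((k + α).factorial : ℝ) / (k.factorial : ℝ) * u ^ k
      = -u * (((m + 1 + α).factorial : ℝ) / (m.factorial : ℝ)) * (1 - u) ^ m := by
  rw [Finset.sum_range_succ']
  have h0 : (-1 : ℝ) ^ 0 * ((m + 1 + α).choose (m + 1 - 0) : ℝ) * ((0:ℕ) : ℝ)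
      * (((0:ℕ) + α).factorial : ℝ) / (((0:ℕ).factorial : ℝ)) * u ^ 0 = 0 := by simp
  rw [h0, add_zero]
  have hcongr : ∀ k ∈ Finset.range (m + 1),
      (-1 : ℝ) ^ (k+1) * ((m + 1 + α).choose (m + 1 - (k+1)) : ℝ) * ((k+1 : ℕ) : ℝ)
        * (((k+1) + α).factorial : ℝ) / (((k+1 : ℕ).factorial : ℝ)) * u ^ (k+1)
      = (-u) * ((-1 : ℝ) ^ k * ((m + (α+1)).choose (m - k) : ℝ)
          * ((k + (α+1)).factorial : ℝ) / (k.factorial : ℝ) * u ^ k) := by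
    intro k hk
    have e1 : m + 1 - (k + 1) = m - k := by omega
    have e2 : m + 1 + α = m + (α + 1) := by omega
    have e3 : k + 1 + α = k + (α + 1) := by omega
    rw [e1, e2, e3, Nat.factorial_succ, pow_succ, pow_succ]
    have hkf : (k.factorial : ℝ) ≠ 0 := Nat.cast_ne_zero.mpr k.factorial_ne_zero
    have hk1 : ((k:ℝ) + 1) ≠ 0 := by positivity
    push_cast
    field_simp
  rw [Finset.sum_congr rfl hcongr, ← Finset.mul_sum, laguerre_sum m (α+1) u,
    show m + (α+1) = m + 1 + α by omega]
  ring

lemma laguerre_sum_shift (n α : ℕ) (u : ℝ) :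
    ∑ k ∈ Finset.range (n + 1),
      (-1 : ℝ) ^ k * ((n + α).choose (n - k) : ℝ) * ((k + α + 1).factorial : ℝ)
        / (k.factorial : ℝ) * u ^ k
    = ((α : ℝ) + 1) * (((n + α).factorial : ℝ) / (n.factorial : ℝ)) * (1 - u) ^ n
      + ∑ k ∈ Finset.range (n + 1),
          (-1 : ℝ) ^ k * ((n + α).choose (n - k) : ℝ) * (k : ℝ)
            * ((k + α).factorial : ℝ) / (k.factorial : ℝ) * u ^ k := by
  rw [mul_assoc, ← laguerre_sum n α u, Finset.mul_sum, ← Finset.sum_add_distrib]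
  apply Finset.sum_congr rfl
  intro k _
  have hkf : (k.factorial : ℝ) ≠ 0 := Nat.cast_ne_zero.mpr k.factorial_ne_zero
  rw [Nat.factorial_succ]
  push_cast
  field_simp
  ring


/-- The skew inner products of `e_a(x) = exp((a/(1+a))·2Mx)` with the Laguerre
polynomials `f_n(x) = L_n^(2(M-N))(2Mx)`. -/
theorem stmt_12 (M N : ℕ) (hN : 1 ≤ N) (hMN : N ≤ M) (a : ℝ) (ha : -1 < a) :
    (∀ n : ℕ, 1 ≤ n →
      skewInner M N (fun x => Real.exp (a / (1 + a) * (2 * (M : ℝ) * x)))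
          (fun x => genLaguerre n (2 * (M - N)) (2 * (M : ℝ) * x))
        = ((1 + a) / (2 * (M : ℝ))) ^ (2 * (M - N) + 1) *
            ((-a) ^ (n + 1) * ((n + 2 * (M - N) + 1).factorial : ℝ) / (n.factorial : ℝ)
              - (-a) ^ (n - 1) * ((n + 2 * (M - N)).factorial : ℝ) /
                  ((n - 1).factorial : ℝ))) ∧
    skewInner M N (fun x => Real.exp (a / (1 + a) * (2 * (M : ℝ) * x)))
        (fun x => genLaguerre 0 (2 * (M - N)) (2 * (M : ℝ) * x))
      = -(((1 + a) / (2 * (M : ℝ))) ^ (2 * (M - N) + 1) * a *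
          ((2 * (M - N) + 1).factorial : ℝ)) := by
  have hM : 1 ≤ M := le_trans hN hMN
  constructor
  · intro n hn
    obtain ⟨m, rfl⟩ : ∃ m, n = m + 1 := ⟨n - 1, by omega⟩
    rw [skew_eval M N (m + 1) hM a ha, laguerre_sum_shift (m + 1) (2 * (M - N)) (1 + a),
      laguerre_sum_deriv m (2 * (M - N)) (1 + a)]
    set α : ℕ := 2 * (M - N) with hα
    have hmf : (m.factorial : ℝ) ≠ 0 := Nat.cast_ne_zero.mpr m.factorial_ne_zero
    have hm1f : ((m + 1).factorial : ℝ) ≠ 0 := Nat.cast_ne_zero.mpr (m + 1).factorial_ne_zero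
    have e1 : m + 1 - 1 = m := by omega
    have e2 : (m + 1 + α + 1).factorial = (m + 1 + α + 1) * (m + 1 + α).factorial :=
      Nat.factorial_succ _
    have e3 : (m + 1).factorial = (m + 1) * m.factorial := Nat.factorial_succ _
    have e4 : (-a : ℝ) ^ (m + 1 + 1) = (-a) ^ m * (-a) ^ 2 := by rw [← pow_add]
    have e5 : (1 - (1 + a) : ℝ) ^ (m + 1) = (1 - (1 + a)) ^ m * (1 - (1 + a)) := pow_succ _ _
    have e6 : (1 - (1 + a) : ℝ) = -a := by ring
    have e7 : (-a : ℝ) ^ m = (1 - (1 + a)) ^ m := by rw [e6]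
    rw [e1, e2, e3, e4, e5, e6, e7]
    push_cast
    field_simp
    ring
  · rw [skew_eval M N 0 hM a ha]
    simp only [zero_add, Finset.sum_range_one]
    norm_num
    ring
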